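/- Let p be an odd prime and q an integer that is a primitive root modulo p^2. Then the set of powers of q is dense in the p-adic units Z_p^×. -/

import Mathlib

/-- `q` is a primitive root modulo `m`: its residue class is a unit generating `(ZMod m)ˣ`. -/
def IsPrimitiveRootMod (q : ℤ) (m : ℕ) : Prop :=
  ∃ u : (ZMod m)ˣ, (u : ZMod m) = (q : ZMod m) ∧ ∀ v : (ZMod m)ˣ, v ∈ Subgroup.zpowers u

open Subgroup in
lemma gen_lemma (p : ℕ) [hp : Fact p.Prime] (hodd : Odd p) (q : ℤ)
    (hq : IsPrimitiveRootMod q (p ^ 2)) (k : ℕ) (hk : 2 ≤ k) :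
    ∀ w : (ZMod (p ^ k))ˣ, ∃ n : ℕ, (q : ZMod (p ^ k)) ^ n = (w : ZMod (p ^ k)) := by
  obtain ⟨u2, hu2, hgen⟩ := hq
  haveI : NeZero (p ^ 2) := ⟨pow_ne_zero _ hp.out.ne_zero⟩
  haveI : NeZero (p ^ k) := ⟨pow_ne_zero _ hp.out.ne_zero⟩
  -- order of u2
  have ord2 : orderOf u2 = p * (p - 1) := by
    have h := orderOf_eq_card_of_forall_mem_zpowers hgen
    rwa [Nat.card_eq_fintype_card, ZMod.card_units_eq_totient, Nat.totient_prime_pow hp.out (by norm_num),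
      pow_one] at h
  -- p does not divide q
  have hpq : ¬ (p : ℤ) ∣ q := by
    intro h
    have h0 : (q : ZMod p) = 0 := (ZMod.intCast_zmod_eq_zero_iff_dvd q p).mpr h
    have hdvd : p ∣ p ^ 2 := dvd_pow_self p two_ne_zero
    have := (Units.map (ZMod.castHom hdvd (ZMod p)).toMonoidHom u2).ne_zero
    apply this
    simp only [Units.coe_map, RingHom.toMonoidHom_eq_coe, MonoidHom.coe_coe, hu2]
    rw [map_intCast, h0]
  have hq0 : (q : ZMod p) ≠ 0 := fun h => hpq ((ZMod.intCast_zmod_eq_zero_iff_dvd q p).mp h)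
  have hpZ : Prime (p : ℤ) := Nat.prime_iff_prime_int.mp hp.out
  -- Fermat little theorem
  have hFermat : (p : ℤ) ∣ q ^ (p - 1) - 1 := by
    have h1 : (q : ZMod p) ^ (p - 1) = 1 := ZMod.pow_card_sub_one_eq_one hq0
    have : ((q ^ (p - 1) - 1 : ℤ) : ZMod p) = 0 := by push_cast [h1]; ring
    exact (ZMod.intCast_zmod_eq_zero_iff_dvd _ p).mp this
  -- multiplicity exactly 1
  have hnotsq : ¬ ((p : ℤ) ^ 2 ∣ q ^ (p - 1) - 1) := by
    intro h
    have h0 : ((q ^ (p - 1) - 1 : ℤ) : ZMod (p ^ 2)) = 0 := by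
      rw [ZMod.intCast_zmod_eq_zero_iff_dvd]; exact_mod_cast h
    have h1 : (q : ZMod (p ^ 2)) ^ (p - 1) = 1 := by
      have := sub_eq_zero.mp (by push_cast at h0 ⊢; exact h0)
      exact_mod_cast this
    have hu2p : u2 ^ (p - 1) = 1 := by
      ext; rw [Units.val_pow_eq_pow_val, hu2, h1, Units.val_one]
    have := orderOf_dvd_of_pow_eq_one hu2p
    rw [ord2] at this
    have hle := Nat.le_of_dvd (by have := hp.out.two_le; omega) this
    have h2 : 2 * (p - 1) ≤ p * (p - 1) := Nat.mul_le_mul_right _ hp.out.two_le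
    have := hp.out.two_le
    omega
  have hmul1 : emultiplicity (p : ℤ) (q ^ (p - 1) - 1) = 1 := by
    rw [show ((1 : ℕ∞)) = ((1 : ℕ) : ℕ∞) by norm_cast, emultiplicity_eq_coe]
    constructor
    · simpa using hFermat
    · simpa using hnotsq
  have hx : ¬ (p : ℤ) ∣ q ^ (p - 1) := fun h => hpq (hpZ.dvd_of_dvd_pow h)
  -- key non-divisibility
  have hkey : ¬ ((p : ℤ) ^ k ∣ q ^ ((p - 1) * p ^ (k - 2)) - 1) := by
    intro hdvd
    have hle := le_emultiplicity_of_pow_dvd hdvd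
    rw [pow_mul] at hle
    have hLTE := Int.emultiplicity_pow_sub_pow hp.out hodd
      (x := q ^ (p - 1)) (y := 1) (by simpa using hFermat) hx (p ^ (k - 2))
    rw [one_pow, hmul1, emultiplicity_pow_self_of_prime hp.out.prime] at hLTE
    rw [hLTE] at hle
    have : ((k : ℕ∞)) ≤ ((k - 1 : ℕ) : ℕ∞) := by
      convert hle using 1
      rw [show ((1 : ℕ∞)) = ((1 : ℕ) : ℕ∞) by norm_cast, ← Nat.cast_add]
      congr 1
      omega
    have := Nat.cast_le.mp this
    omega
  -- the unit given by q mod p^k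
  have hpq' : ¬ p ∣ q.natAbs := fun h =>
    hpq (Int.dvd_natAbs.mp (Int.natCast_dvd_natCast.mpr h))
  have hcop : Nat.Coprime q.natAbs (p ^ k) :=
    Nat.Coprime.pow_right _ ((Nat.Prime.coprime_iff_not_dvd hp.out).mpr hpq').symm
  have hunit : IsUnit (q : ZMod (p ^ k)) := by
    have hna : IsUnit ((q.natAbs : ℕ) : ZMod (p ^ k)) :=
      (ZMod.isUnit_iff_coprime _ _).mpr hcop
    rcases Int.natAbs_eq q with h | h
    · rw [h, Int.cast_natCast]; exact hna
    · rw [h, Int.cast_neg, Int.cast_natCast]; exact hna.neg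
  have hUval : (hunit.unit : ZMod (p ^ k)) = (q : ZMod (p ^ k)) := hunit.unit_spec
  set U := hunit.unit with hUdef
  have cardk : Nat.card (ZMod (p ^ k))ˣ = p ^ (k - 1) * (p - 1) := by
    rw [Nat.card_eq_fintype_card, ZMod.card_units_eq_totient,
      Nat.totient_prime_pow hp.out (by omega)]
  have hdvd2 : p ^ 2 ∣ p ^ k := pow_dvd_pow p hk
  have hmap : Units.map (ZMod.castHom hdvd2 (ZMod (p ^ 2))).toMonoidHom U = u2 := by
    ext
    simp only [Units.coe_map, RingHom.toMonoidHom_eq_coe, MonoidHom.coe_coe, hUval, hu2]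
    rw [map_intCast]
  have h2d : p * (p - 1) ∣ orderOf U := by
    rw [← ord2, ← hmap]; exact orderOf_map_dvd _ U
  have hdN : orderOf U ∣ p ^ (k - 1) * (p - 1) := by
    rw [← cardk, Nat.card_eq_fintype_card]; exact orderOf_dvd_card
  have hUkey : ¬ orderOf U ∣ p ^ (k - 2) * (p - 1) := by
    intro h
    have hpow : U ^ (p ^ (k - 2) * (p - 1)) = 1 := orderOf_dvd_iff_pow_eq_one.mp h
    apply hkey
    have hq1 : (q : ZMod (p ^ k)) ^ ((p - 1) * p ^ (k - 2)) = 1 := by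
      rw [mul_comm, ← hUval, ← Units.val_pow_eq_pow_val, hpow, Units.val_one]
    have h0 : ((q ^ ((p - 1) * p ^ (k - 2)) - 1 : ℤ) : ZMod (p ^ k)) = 0 := by
      push_cast [hq1]; ring
    have := (ZMod.intCast_zmod_eq_zero_iff_dvd _ (p ^ k)).mp h0
    exact_mod_cast this
  have hord : orderOf U = p ^ (k - 1) * (p - 1) := by
    obtain ⟨d1, d2, hd1, hd2, hmul⟩ := Nat.dvd_mul.mp hdN
    obtain ⟨j, hj, rfl⟩ := (Nat.dvd_prime_pow hp.out).mp hd1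
    have hj' : j = k - 1 := by
      by_contra hne
      have hjle : j ≤ k - 2 := by omega
      exact hUkey (dvd_trans (hmul ▸ mul_dvd_mul (pow_dvd_pow p hjle) hd2) dvd_rfl)
    subst hj'
    have hcp : Nat.Coprime (p - 1) (p ^ (k - 1)) := by
      refine Nat.Coprime.pow_right _ ?_
      have h2 := hp.out.two_le
      exact (Nat.coprime_comm.mp ((Nat.Prime.coprime_iff_not_dvd hp.out).mpr
        (fun h => by have := Nat.le_of_dvd (by omega) h; omega)))
    have hd2' : (p - 1) ∣ d2 := by
      have h1 : (p - 1) ∣ p ^ (k - 1) * d2 := by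
        rw [hmul]
        exact dvd_trans (dvd_mul_left _ _) h2d
      exact hcp.dvd_of_dvd_mul_left h1
    have : d2 = p - 1 := Nat.dvd_antisymm hd2 hd2'
    rw [← hmul, this]
  have htop : Subgroup.zpowers U = ⊤ :=
    Subgroup.eq_top_of_card_eq _ (by rw [Nat.card_zpowers, hord, cardk])
  intro w
  have hw : w ∈ Submonoid.powers U := by
    rw [mem_powers_iff_mem_zpowers, htop]
    exact Subgroup.mem_top w
  obtain ⟨n, hn⟩ := hw
  exact ⟨n, by rw [← hUval, ← Units.val_pow_eq_pow_val]; exact congrArg Units.val hn⟩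

lemma padic_units_val_embedding (p : ℕ) [hp : Fact p.Prime] :
    Topology.IsEmbedding (Units.val : ℤ_[p]ˣ → ℤ_[p]) := by
  apply Units.isEmbedding_val_mk' (f := PadicInt.inv)
  · have key : ∀ a b : ℤ_[p], IsUnit a → IsUnit b →
        dist (PadicInt.inv a) (PadicInt.inv b) ≤ dist a b := by
      intro a b ha hb
      have ha1 := PadicInt.isUnit_iff.mp ha
      have hb1 := PadicInt.isUnit_iff.mp hb
      have hae : a * a.inv = 1 := PadicInt.mul_inv ha1
      have hbe : b * b.inv = 1 := PadicInt.mul_inv hb1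
      have hid : a.inv - b.inv = a.inv * b.inv * (b - a) := by
        linear_combination b.inv * hae - a.inv * hbe
      rw [dist_eq_norm, dist_eq_norm, hid, norm_mul, norm_mul]
      calc ‖a.inv‖ * ‖b.inv‖ * ‖b - a‖ ≤ 1 * 1 * ‖b - a‖ := by
            gcongr <;> exact PadicInt.norm_le_one _
        _ = ‖a - b‖ := by rw [one_mul, one_mul, norm_sub_rev]
    rw [Metric.continuousOn_iff]
    intro x hx ε hε
    exact ⟨ε, hε, fun y hy hd => lt_of_le_of_lt (key y x hy hx) hd⟩
  · intro u
    exact (Units.inv_eq_of_mul_eq_one_right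
      (PadicInt.mul_inv (PadicInt.isUnit_iff.mp u.isUnit))).symm

theorem powers_dense_in_padic_units (p : ℕ) [Fact p.Prime] (hodd : Odd p)
    (q : ℤ) (hq : IsPrimitiveRootMod q (p ^ 2))
    (u : ℤ_[p]ˣ) (hu : (u : ℤ_[p]) = (q : ℤ_[p])) :
    Dense (Set.range fun n : ℕ => u ^ n) := by
  have hp : Fact p.Prime := inferInstance
  have hemb := padic_units_val_embedding p
  intro v
  rw [hemb.toIsInducing.closure_eq_preimage_closure_image, Set.mem_preimage,
    Metric.mem_closure_iff]
  intro ε hε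
  have hp1 : (1 : ℝ) < (p : ℝ) := by exact_mod_cast hp.out.one_lt
  have hinv1 : ((p : ℝ))⁻¹ < 1 := inv_lt_one_of_one_lt₀ hp1
  obtain ⟨m, hm⟩ := exists_pow_lt_of_lt_one hε hinv1
  set k := max m 2 with hkdef
  have hk2 : 2 ≤ k := le_max_right _ _
  have hkm : m ≤ k := le_max_left _ _
  have hlt : ((p : ℝ))⁻¹ ^ k < ε :=
    lt_of_le_of_lt (pow_le_pow_of_le_one (by positivity) hinv1.le hkm) hm
  haveI : NeZero (p ^ k) := ⟨pow_ne_zero _ hp.out.ne_zero⟩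
  obtain ⟨n, hn⟩ := gen_lemma p hodd q hq k hk2
    (Units.map (PadicInt.toZModPow k).toMonoidHom v)
  refine ⟨((u ^ n : ℤ_[p]ˣ) : ℤ_[p]), ⟨u ^ n, ⟨n, rfl⟩, rfl⟩, ?_⟩
  have hker : PadicInt.toZModPow k (((u ^ n : ℤ_[p]ˣ) : ℤ_[p]) - (v : ℤ_[p])) = 0 := by
    rw [map_sub, Units.val_pow_eq_pow_val, map_pow, hu, map_intCast, hn]
    simp [Units.coe_map]
  have hmem : ((u ^ n : ℤ_[p]ˣ) : ℤ_[p]) - (v : ℤ_[p]) ∈ Ideal.span {(p : ℤ_[p]) ^ k} := by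
    rw [← PadicInt.ker_toZModPow]
    exact hker
  have hnorm : ‖((u ^ n : ℤ_[p]ˣ) : ℤ_[p]) - (v : ℤ_[p])‖ ≤ (p : ℝ) ^ (-(k : ℤ)) :=
    (PadicInt.norm_le_pow_iff_mem_span_pow _ _).mpr hmem
  rw [dist_eq_norm, norm_sub_rev]
  calc ‖((u ^ n : ℤ_[p]ˣ) : ℤ_[p]) - (v : ℤ_[p])‖ ≤ (p : ℝ) ^ (-(k : ℤ)) := hnorm
    _ = ((p : ℝ))⁻¹ ^ k := by rw [zpow_neg, inv_pow, zpow_natCast]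
    _ < ε := hlt
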